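/- (Inverse differentiated polar retraction on the Stiefel manifold, verification.) Let $X \in \mathrm{St}(p,n)$, $\eta \in T_X\mathrm{St}(p,n)$, $Y = (X+\eta)(I_p+\eta^T\eta)^{-1/2}$, and suppose $M := Y^T(X+\eta)$ is invertible. Given $\zeta \in T_Y\mathrm{St}(p,n)$, set $P = (I_n - YY^T)\zeta M$ and let $A$ solve $X^TYA + AY^TX = [(Y^T\zeta)M + M(Y^T\zeta)]Y^TX - X^TP - P^TX$. Then $\xi := YA + P$ satisfies $X^T\xi + \xi^TX = 0$, i.e., $\xi \in T_X\mathrm{St}(p,n)$. -/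

import Mathlib

open Matrix

/-- trace of (skew * symmetric) vanishes. -/
lemma trace_skew_mul_symm {p : ℕ} (K M : Matrix (Fin p) (Fin p) ℝ)
    (hK : Kᵀ = -K) (hM : Mᵀ = M) : (K * M).trace = 0 := by
  have h : (K * M).trace = -(K * M).trace := by
    calc (K * M).trace = ((K * M)ᵀ).trace := (Matrix.trace_transpose _).symm
    _ = (Mᵀ * Kᵀ).trace := by rw [Matrix.transpose_mul]
    _ = (M * (-K)).trace := by rw [hK, hM]
    _ = -(M * K).trace := by rw [Matrix.mul_neg, Matrix.trace_neg]
    _ = -(K * M).trace := by rw [Matrix.trace_mul_comm]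
  linarith

/-- If `Sq` is positive definite and `trace (Eᵀ (Sq E)) = 0` then `E = 0`. -/
lemma eq_zero_of_trace_conj_posDef {p : ℕ} (Sq E : Matrix (Fin p) (Fin p) ℝ)
    (hSq : Sq.PosDef) (h : (Eᵀ * (Sq * E)).trace = 0) : E = 0 := by
  have hdiag : ∀ j, (Eᵀ * (Sq * E)) j j = (fun i => E i j) ⬝ᵥ Sq *ᵥ (fun i => E i j) := by
    intro j
    simp only [Matrix.mul_apply, Matrix.transpose_apply, dotProduct, Matrix.mulVec]
  have hnonneg : ∀ j, 0 ≤ (Eᵀ * (Sq * E)) j j := by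
    intro j
    rw [hdiag j]
    have := hSq.posSemidef.dotProduct_mulVec_nonneg (fun i => E i j)
    simpa using this
  have htr : ∑ j, (Eᵀ * (Sq * E)) j j = 0 := h
  have hzero : ∀ j, (Eᵀ * (Sq * E)) j j = 0 := by
    intro j
    refine le_antisymm ?_ (hnonneg j)
    calc (Eᵀ * (Sq * E)) j j = ∑ i ∈ ({j} : Finset (Fin p)), (Eᵀ * (Sq * E)) i i := by simp
    _ ≤ ∑ i, (Eᵀ * (Sq * E)) i i :=
        Finset.sum_le_sum_of_subset_of_nonneg (Finset.subset_univ _) (fun i _ _ => hnonneg i)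
    _ = 0 := htr
  have hcol0 : ∀ j, (fun i => E i j) = 0 := by
    intro j
    by_contra hc
    have hpos : 0 < (fun i => E i j) ⬝ᵥ Sq *ᵥ (fun i => E i j) := by
      simpa using hSq.dotProduct_mulVec_pos hc
    have h0 := hzero j
    rw [hdiag j] at h0
    exact absurd h0 (ne_of_gt hpos)
  ext i j
  simpa using congrFun (hcol0 j) i

/-- inverse differentiated polar retraction on the Stiefel manifold:
the vector `ξ = YA + P` built from the stated Sylvester equation is tangent at `X`. -/
theorem stmt18 (n p : ℕ)
    (X η : Matrix (Fin n) (Fin p) ℝ) (hX : Xᵀ * X = 1) (hη : Xᵀ * η + ηᵀ * X = 0)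
    (Sq : Matrix (Fin p) (Fin p) ℝ) (hSq : Sq * Sq = 1 + ηᵀ * η) (hSqs : Sqᵀ = Sq)
    (hSqpd : Sq.PosDef)
    (Y : Matrix (Fin n) (Fin p) ℝ) (hY : Y = (X + η) * Sq⁻¹)
    (M : Matrix (Fin p) (Fin p) ℝ) (hM : M = Yᵀ * (X + η)) (hMinv : IsUnit M)
    (ζ : Matrix (Fin n) (Fin p) ℝ) (hζ : Yᵀ * ζ + ζᵀ * Y = 0)
    (P : Matrix (Fin n) (Fin p) ℝ) (hP : P = (1 - Y * Yᵀ) * ζ * M)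
    (A : Matrix (Fin p) (Fin p) ℝ)
    (hA : Xᵀ * Y * A + A * (Yᵀ * X)
        = ((Yᵀ * ζ) * M + M * (Yᵀ * ζ)) * (Yᵀ * X) - Xᵀ * P - Pᵀ * X) :
    Xᵀ * (Y * A + P) + (Y * A + P)ᵀ * X = 0 := by
  have hSqu : IsUnit Sq := hSqpd.isUnit
  have hSqdet : IsUnit Sq.det := (Matrix.isUnit_iff_isUnit_det _).1 hSqu
  have hSi : Sq⁻¹ * Sq = 1 := Matrix.nonsing_inv_mul _ hSqdet
  have hIs : Sq * Sq⁻¹ = 1 := Matrix.mul_nonsing_inv _ hSqdet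
  have hSit : Sq⁻¹ᵀ = Sq⁻¹ := by rw [Matrix.transpose_nonsing_inv, hSqs]
  have hYT : Yᵀ = Sq⁻¹ * (X + η)ᵀ := by rw [hY, Matrix.transpose_mul, hSit]
  -- (X+η)ᵀ(X+η) = Sq * Sq
  have hηX : ηᵀ * X = -(Xᵀ * η) := by linear_combination (norm := noncomm_ring) hη
  have hGram : (X + η)ᵀ * (X + η) = Sq * Sq := by
    rw [hSq, Matrix.transpose_add, Matrix.add_mul, Matrix.mul_add, Matrix.mul_add, hX, hηX]
    abel
  -- M = Sq
  have hMSq : M = Sq := by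
    rw [hM, hYT, Matrix.mul_assoc, hGram, ← Matrix.mul_assoc, hSi, Matrix.one_mul]
  -- opaque abbreviations
  obtain ⟨B, hB⟩ : ∃ B, B = Yᵀ * ζ := ⟨_, rfl⟩
  obtain ⟨W, hW⟩ : ∃ W, W = Xᵀ * Y := ⟨_, rfl⟩
  obtain ⟨K, hK⟩ : ∃ K, K = Xᵀ * η := ⟨_, rfl⟩
  have hBskew : Bᵀ = -B := by
    have h1 : ζᵀ * Y = -(Yᵀ * ζ) := by linear_combination (norm := noncomm_ring) hζ
    rw [hB, Matrix.transpose_mul, Matrix.transpose_transpose, h1]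
  have hKskew : Kᵀ = -K := by
    rw [hK, Matrix.transpose_mul, Matrix.transpose_transpose, hηX]
  have hWT : Wᵀ = Yᵀ * X := by
    rw [hW, Matrix.transpose_mul, Matrix.transpose_transpose]
  obtain ⟨S, hS⟩ : ∃ S, S = B * Sq + Sq * B := ⟨_, rfl⟩
  have hSskew : Sᵀ = -S := by
    rw [hS, Matrix.transpose_add, Matrix.transpose_mul, Matrix.transpose_mul, hSqs, hBskew]
    noncomm_ring
  -- hA in concise form
  have hA' : W * A + A * Wᵀ = S * Wᵀ - Xᵀ * P - Pᵀ * X := by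
    rw [hWT, hW, hS, hB, ← hMSq]; exact hA
  -- transpose of hA'
  have hA'T : Aᵀ * Wᵀ + W * Aᵀ = -(W * S) - Pᵀ * X - Xᵀ * P := by
    have h := congrArg Matrix.transpose hA'
    simp only [Matrix.transpose_add, Matrix.transpose_sub, Matrix.transpose_mul,
      Matrix.transpose_transpose, hSskew, Matrix.mul_neg] at h
    linear_combination (norm := noncomm_ring) h
  obtain ⟨D, hD⟩ : ∃ D, D = A - Aᵀ - S := ⟨_, rfl⟩
  have hDskew : Dᵀ = -D := by
    rw [hD, Matrix.transpose_sub, Matrix.transpose_sub, Matrix.transpose_transpose, hSskew]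
    noncomm_ring
  -- the homogeneous Lyapunov equation for D
  have hLyap : W * D + D * Wᵀ = 0 := by
    rw [hD]
    linear_combination (norm := noncomm_ring) hA' - hA'T
  -- explicit forms of W
  have hWform : W = (1 + K) * Sq⁻¹ := by
    rw [hW, hY, ← Matrix.mul_assoc, Matrix.mul_add, hX, hK, Matrix.add_mul]
  have hWTform : Wᵀ = Sq⁻¹ * (1 - K) := by
    rw [hWform, Matrix.transpose_mul, hSit, Matrix.transpose_add, Matrix.transpose_one, hKskew]
    noncomm_ring
  obtain ⟨E, hE⟩ : ∃ E, E = Sq⁻¹ * D * Sq⁻¹ := ⟨_, rfl⟩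
  have hEskew : Eᵀ = -E := by
    rw [hE, Matrix.transpose_mul, Matrix.transpose_mul, hSit, hDskew]
    noncomm_ring
  have hDE : D = Sq * E * Sq := by
    rw [hE]
    calc D = (Sq * Sq⁻¹) * D * (Sq⁻¹ * Sq) := by rw [hIs, hSi]; noncomm_ring
    _ = Sq * (Sq⁻¹ * D * Sq⁻¹) * Sq := by noncomm_ring
  -- the key equation in E
  have heq : (1 + K) * (E * Sq) + (Sq * E) * (1 - K) = 0 := by
    have h := hLyap
    rw [hWTform, hWform, hDE] at h
    calc (1 + K) * (E * Sq) + (Sq * E) * (1 - K)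
        = (1 + K) * ((Sq⁻¹ * Sq) * (E * Sq)) + ((Sq * E) * (Sq * Sq⁻¹)) * (1 - K) := by
          rw [hSi, hIs]; noncomm_ring
    _ = (1 + K) * Sq⁻¹ * (Sq * E * Sq) + Sq * E * Sq * (Sq⁻¹ * (1 - K)) := by noncomm_ring
    _ = 0 := h
  -- trace argument
  have htr : (Eᵀ * (Sq * E)).trace = 0 := by
    have h0 : (((1 + K) * (E * Sq) + (Sq * E) * (1 - K)) * Eᵀ).trace = 0 := by
      rw [heq, Matrix.zero_mul, Matrix.trace_zero]
    have hexp : ((1 + K) * (E * Sq) + (Sq * E) * (1 - K)) * Eᵀ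
        = E * Sq * Eᵀ + K * (E * Sq * Eᵀ) + Sq * E * Eᵀ - Sq * (E * K * Eᵀ) := by
      noncomm_ring
    rw [hexp] at h0
    have t1 : (K * (E * Sq * Eᵀ)).trace = 0 := by
      apply trace_skew_mul_symm _ _ hKskew
      rw [Matrix.transpose_mul, Matrix.transpose_mul, Matrix.transpose_transpose, hSqs, hEskew]
      noncomm_ring
    have t2 : (Sq * (E * K * Eᵀ)).trace = 0 := by
      rw [Matrix.trace_mul_comm]
      apply trace_skew_mul_symm _ _ _ hSqs
      rw [Matrix.transpose_mul, Matrix.transpose_mul, Matrix.transpose_transpose, hKskew, hEskew]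
      noncomm_ring
    have hcomm : Eᵀ * E = E * Eᵀ := by rw [hEskew]; noncomm_ring
    have t3 : (E * Sq * Eᵀ).trace = (Sq * E * Eᵀ).trace := by
      rw [Matrix.mul_assoc, Matrix.trace_mul_comm, Matrix.mul_assoc, hcomm, ← Matrix.mul_assoc]
    have t4 : (Sq * E * Eᵀ).trace = (Eᵀ * (Sq * E)).trace := Matrix.trace_mul_comm _ _
    simp only [Matrix.trace_add, Matrix.trace_sub] at h0
    rw [t1, t2, t3, t4] at h0
    linarith
  have hE0 : E = 0 := eq_zero_of_trace_conj_posDef Sq E hSqpd htr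
  have hD0 : D = 0 := by rw [hDE, hE0, Matrix.mul_zero, Matrix.zero_mul]
  have hAS : Aᵀ - A = -S := by
    rw [hD] at hD0
    linear_combination (norm := noncomm_ring) - hD0
  -- conclude
  have hgoal : Xᵀ * (Y * A + P) + (Y * A + P)ᵀ * X
      = (W * A + A * Wᵀ) + (Aᵀ - A) * Wᵀ + (Xᵀ * P + Pᵀ * X) := by
    rw [hWT, hW]
    simp only [Matrix.transpose_add, Matrix.transpose_mul, Matrix.transpose_transpose,
      Matrix.mul_add, Matrix.add_mul, Matrix.sub_mul, Matrix.mul_assoc]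
    abel
  rw [hgoal, hA', hAS]
  noncomm_ring
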